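/- arXiv:2411.06006 — 2 statements merged into one kernel-verified Lean document; each statement's English description precedes it below -/
import Mathlib

section
/- There is a universal constant C > 0 such that for every finite set V with |V| ≥ 2 and every probability distribution q on V, d(q, U) ≥ (C / log |V|) · ENT(q), where U is the uniform distribution on V, ENT(q) = Σ_i q_i log(|V| q_i), and d(q,U) = Σ_i [½ q_i log q_i + ½ (1/|V|) log(1/|V|) − ((q_i + 1/|V|)/2) log((q_i + 1/|V|)/2)]. -/
open Finset

open Real

noncomputable def Hfun (t : ℝ) : ℝ :=
  (1/2) * (t * Real.log t) - ((t+1)/2) * Real.log ((t+1)/2)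

noncomputable def PsiFun (t : ℝ) : ℝ := t * Real.log t - t + 1

lemma hasDerivAt_half : ∀ t : ℝ, HasDerivAt (fun t : ℝ => (t+1)/2) (1/2) t := by
  intro t
  simpa using ((hasDerivAt_id t).add_const 1).div_const 2

lemma hasDerivAt_Hfun {t : ℝ} (ht : 0 < t) :
    HasDerivAt Hfun ((1/2) * Real.log t - (1/2) * Real.log ((t+1)/2)) t := by
  have h1 : HasDerivAt (fun t : ℝ => t * Real.log t) (Real.log t + 1) t :=
    Real.hasDerivAt_mul_log ht.ne'
  have h2 : HasDerivAt (fun t : ℝ => ((t+1)/2) * Real.log ((t+1)/2))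
      ((Real.log ((t+1)/2) + 1) * (1/2)) t := by
    have hne : ((t+1)/2 : ℝ) ≠ 0 := by positivity
    have := (Real.hasDerivAt_mul_log hne).comp t (hasDerivAt_half t)
    simpa [Function.comp_def] using this
  have := (h1.const_mul (1/2 : ℝ)).sub h2
  refine this.congr_deriv ?_
  ring

lemma hasDerivAt_PsiFun {t : ℝ} (ht : 0 < t) :
    HasDerivAt PsiFun (Real.log t) t := by
  have h1 : HasDerivAt (fun t : ℝ => t * Real.log t) (Real.log t + 1) t :=
    Real.hasDerivAt_mul_log ht.ne'
  have := (h1.sub (hasDerivAt_id t)).add_const 1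
  refine this.congr_deriv ?_
  ring

lemma continuous_Hfun : Continuous Hfun := by
  have h1 : Continuous fun t : ℝ => ((t+1)/2) * Real.log ((t+1)/2) :=
    Real.continuous_mul_log.comp (by continuity)
  exact (continuous_const.mul Real.continuous_mul_log).sub h1

lemma Hfun_one : Hfun 1 = 0 := by simp [Hfun]

lemma PsiFun_one : PsiFun 1 = 0 := by simp [PsiFun]

/-- Lemma B: on [0,1], Psi ≤ 4 H. -/
lemma psi_le_four_H {t : ℝ} (h0 : 0 ≤ t) (h1 : t ≤ 1) : PsiFun t ≤ 4 * Hfun t := by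
  set K : ℝ → ℝ := fun t => 4 * Hfun t - PsiFun t with hK
  have hcont : ContinuousOn K (Set.Icc 0 1) := by
    apply Continuous.continuousOn
    exact (continuous_const.mul continuous_Hfun).sub
      ((Real.continuous_mul_log.sub continuous_id).add continuous_const)
  have hderiv : ∀ x ∈ Set.Ioo (0:ℝ) 1,
      HasDerivAt K (Real.log x - 2 * Real.log ((x+1)/2)) x := by
    intro x hx
    have := ((hasDerivAt_Hfun hx.1).const_mul (4:ℝ)).sub (hasDerivAt_PsiFun hx.1)
    refine this.congr_deriv ?_
    ring
  have hanti : AntitoneOn K (Set.Icc 0 1) := by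
    apply antitoneOn_of_deriv_nonpos (convex_Icc 0 1) hcont
    · intro x hx
      rw [interior_Icc] at hx
      exact ((hderiv x hx).differentiableAt).differentiableWithinAt
    · intro x hx
      rw [interior_Icc] at hx
      rw [(hderiv x hx).deriv]
      have hxp : (0:ℝ) < x := hx.1
      have hsq : x ≤ ((x+1)/2)^2 := by nlinarith [sq_nonneg (x-1)]
      have := Real.log_le_log hxp hsq
      rw [Real.log_pow] at this
      push_cast at this
      linarith
  have := hanti (Set.mem_Icc.mpr ⟨h0, h1⟩) (Set.mem_Icc.mpr ⟨by norm_num, le_refl 1⟩) h1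
  simp only [hK, Hfun_one, PsiFun_one] at this
  linarith

/-- Lemma C: for t ≥ 1, (t+1) log t ≤ 2 (t-1)(1+log t). -/
lemma lemC {t : ℝ} (h1 : 1 ≤ t) :
    (t+1) * Real.log t ≤ 2 * (t-1) * (1 + Real.log t) := by
  set P : ℝ → ℝ := fun t => 2*(t-1) + (t-3) * Real.log t with hP
  have hderiv : ∀ x : ℝ, 0 < x →
      HasDerivAt P (2 + (Real.log x + (x-3) * x⁻¹)) x := by
    intro x hx
    have hlog : HasDerivAt Real.log x⁻¹ x := Real.hasDerivAt_log hx.ne'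
    have h2 : HasDerivAt (fun t : ℝ => (t-3) * Real.log t)
        (1 * Real.log x + (x-3) * x⁻¹) x :=
      ((hasDerivAt_id x).sub_const 3).mul hlog
    have := (((hasDerivAt_id x).sub_const 1).const_mul (2:ℝ)).add h2
    refine this.congr_deriv ?_
    ring
  have hmono : MonotoneOn P (Set.Ici 1) := by
    apply monotoneOn_of_deriv_nonneg (convex_Ici 1)
    · intro x hx
      have hx0 : (0:ℝ) < x := lt_of_lt_of_le one_pos hx
      exact ((hderiv x hx0).continuousAt).continuousWithinAt
    · intro x hx
      rw [interior_Ici] at hx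
      have hx0 : (0:ℝ) < x := lt_trans one_pos hx
      exact ((hderiv x hx0).differentiableAt).differentiableWithinAt
    · intro x hx
      rw [interior_Ici] at hx
      have hx0 : (0:ℝ) < x := lt_trans one_pos hx
      rw [(hderiv x hx0).deriv]
      have hlog0 : 0 ≤ Real.log x := Real.log_nonneg hx.le
      have h3 : (x-3) * x⁻¹ ≥ -2 := by
        have e : (x-3) * x⁻¹ = 1 - 3 * x⁻¹ := by field_simp
        have hi : x⁻¹ ≤ 1 := inv_le_one_of_one_le₀ hx.le
        have hi0 : (0:ℝ) ≤ x⁻¹ := inv_nonneg.mpr hx0.le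
        rw [ge_iff_le, e]
        linarith
      linarith
  have := hmono (Set.mem_Ici.mpr (le_refl 1)) (Set.mem_Ici.mpr h1) h1
  simp only [hP] at this
  simp at this
  nlinarith [this]

noncomputable def Gfun (t : ℝ) : ℝ :=
  (1/2) * Real.log t - (1/2) * Real.log ((t+1)/2) - (1/8) * (1 - 4/(t+1)^2)

noncomputable def Qfun (t : ℝ) : ℝ := Hfun t - (1/8) * (t - 3 + 4/(t+1))

lemma hasDerivAt_Qfun {t : ℝ} (ht : 0 < t) : HasDerivAt Qfun (Gfun t) t := by
  have hne : (t + 1 : ℝ) ≠ 0 := by positivity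
  have hinv : HasDerivAt (fun t : ℝ => (t+1)⁻¹) (-1 / (t+1)^2) t := by
    have := (((hasDerivAt_id t).add_const 1)).inv hne
    exact this.congr_deriv (by simp)
  have h2 : HasDerivAt (fun t : ℝ => (1/8) * (t - 3 + 4 * (t+1)⁻¹))
      ((1/8) * (1 + 4 * (-1 / (t+1)^2))) t := by
    exact (((hasDerivAt_id t).sub_const 3).add (hinv.const_mul 4)).const_mul (1/8)
  have h3 := (hasDerivAt_Hfun ht).sub h2
  have he : Qfun = fun t : ℝ => Hfun t - (1/8) * (t - 3 + 4 * (t+1)⁻¹) := by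
    funext x; simp [Qfun, div_eq_mul_inv]
  rw [he]
  refine h3.congr_deriv ?_
  have : ((t+1)^2 : ℝ) ≠ 0 := by positivity
  simp only [Gfun]
  field_simp
  ring

lemma hasDerivAt_Gfun {t : ℝ} (ht : 0 < t) :
    HasDerivAt Gfun (1/(2*t) - 1/(2*(t+1)) - 1/(t+1)^3) t := by
  have hne : (t + 1 : ℝ) ≠ 0 := by positivity
  have hne2 : ((t+1)^2 : ℝ) ≠ 0 := by positivity
  have hl1 : HasDerivAt (fun t : ℝ => Real.log t) t⁻¹ t := Real.hasDerivAt_log ht.ne'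
  have hl2 : HasDerivAt (fun t : ℝ => Real.log ((t+1)/2)) ((1/2) / ((t+1)/2)) t :=
    HasDerivAt.log (hasDerivAt_half t) (by positivity)
  have hsq : HasDerivAt (fun t : ℝ => (t+1)^2) (2*(t+1)) t := by
    have := ((hasDerivAt_id t).add_const 1).pow 2
    exact this.congr_deriv (by simp)
  have hinv : HasDerivAt (fun t : ℝ => ((t+1)^2)⁻¹) (-(2*(t+1)) / ((t+1)^2)^2) t :=
    hsq.inv hne2
  have h4 : HasDerivAt (fun t : ℝ => (1/8) * (1 - 4 * ((t+1)^2)⁻¹))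
      ((1/8) * (0 - 4 * (-(2*(t+1)) / ((t+1)^2)^2))) t := by
    exact ((hasDerivAt_const t 1).sub (hinv.const_mul 4)).const_mul (1/8)
  have h5 := ((hl1.const_mul (1/2:ℝ)).sub (hl2.const_mul (1/2:ℝ))).sub h4
  have he : Gfun = fun t : ℝ =>
      (1/2) * Real.log t - (1/2) * Real.log ((t+1)/2) - (1/8) * (1 - 4 * ((t+1)^2)⁻¹) := by
    funext x; simp [Gfun, div_eq_mul_inv]
  rw [he]
  refine h5.congr_deriv ?_
  field_simp
  ring

lemma Gfun_one : Gfun 1 = 0 := by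
  simp [Gfun]
  norm_num

lemma Gfun_mono : MonotoneOn Gfun (Set.Ioi (0:ℝ)) := by
  apply monotoneOn_of_deriv_nonneg (convex_Ioi 0)
  · intro x hx
    exact ((hasDerivAt_Gfun hx).continuousAt).continuousWithinAt
  · intro x hx
    rw [interior_Ioi] at hx
    exact ((hasDerivAt_Gfun hx).differentiableAt).differentiableWithinAt
  · intro x hx
    rw [interior_Ioi] at hx
    rw [(hasDerivAt_Gfun hx).deriv]
    have hx0 : (0:ℝ) < x := hx
    have key : 1/(2*x) - 1/(2*(x+1)) - 1/(x+1)^3 = (x^2+1)/(2*x*(x+1)^3) := by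
      field_simp
      ring
    rw [key]
    positivity

lemma Qfun_one : Qfun 1 = 0 := by
  simp [Qfun, Hfun]
  norm_num

lemma Qfun_nonneg {t : ℝ} (ht : 0 ≤ t) : 0 ≤ Qfun t := by
  have hcont : ContinuousOn Qfun (Set.Icc 0 1) := by
    apply ContinuousOn.sub continuous_Hfun.continuousOn
    apply ContinuousOn.mul continuousOn_const
    apply ContinuousOn.add (by fun_prop)
    apply ContinuousOn.div continuousOn_const (by fun_prop)
    intro x hx
    have : (0:ℝ) ≤ x := hx.1
    positivity
  rcases le_or_gt t 1 with h1 | h1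
  · -- antitone on [0,1]
    have hanti : AntitoneOn Qfun (Set.Icc 0 1) := by
      apply antitoneOn_of_deriv_nonpos (convex_Icc 0 1) hcont
      · intro x hx
        rw [interior_Icc] at hx
        exact ((hasDerivAt_Qfun hx.1).differentiableAt).differentiableWithinAt
      · intro x hx
        rw [interior_Icc] at hx
        rw [(hasDerivAt_Qfun hx.1).deriv]
        have := Gfun_mono (Set.mem_Ioi.mpr hx.1) (Set.mem_Ioi.mpr one_pos) hx.2.le
        rw [Gfun_one] at this
        exact this
    have := hanti (Set.mem_Icc.mpr ⟨ht, h1⟩) (Set.mem_Icc.mpr ⟨by norm_num, le_refl 1⟩) h1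
    rw [Qfun_one] at this
    linarith
  · -- monotone on [1, ∞)
    have hmono : MonotoneOn Qfun (Set.Ici 1) := by
      apply monotoneOn_of_deriv_nonneg (convex_Ici 1)
      · intro x hx
        have hx0 : (0:ℝ) < x := lt_of_lt_of_le one_pos hx
        exact ((hasDerivAt_Qfun hx0).continuousAt).continuousWithinAt
      · intro x hx
        rw [interior_Ici] at hx
        have hx0 : (0:ℝ) < x := lt_trans one_pos hx
        exact ((hasDerivAt_Qfun hx0).differentiableAt).differentiableWithinAt
      · intro x hx
        rw [interior_Ici] at hx
        have hx0 : (0:ℝ) < x := lt_trans one_pos hx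
        rw [(hasDerivAt_Qfun hx0).deriv]
        have := Gfun_mono (Set.mem_Ioi.mpr one_pos) (Set.mem_Ioi.mpr hx0) hx.le
        rw [Gfun_one] at this
        exact this
    have := hmono (Set.mem_Ici.mpr (le_refl 1)) (Set.mem_Ici.mpr h1.le) h1.le
    rw [Qfun_one] at this
    linarith

/-- Lemma A -/
lemma lemA {t : ℝ} (ht : 0 ≤ t) : (t-1)^2 / (8*(t+1)) ≤ Hfun t := by
  have hne : (t + 1 : ℝ) ≠ 0 := by positivity
  have h := Qfun_nonneg ht
  have he : (t-1)^2 / (8*(t+1)) = (1/8) * (t - 3 + 4/(t+1)) := by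
    field_simp
    ring
  rw [he]
  simp only [Qfun] at h
  linarith

lemma Hfun_nonneg {t : ℝ} (ht : 0 ≤ t) : 0 ≤ Hfun t :=
  le_trans (by positivity) (lemA ht)

/-- Master pointwise lemma. -/
lemma master {t L : ℝ} (ht : 0 ≤ t) (hL : 0 ≤ L) (hlog : Real.log t ≤ L) :
    PsiFun t ≤ 16 * (1 + L) * Hfun t := by
  have hH := Hfun_nonneg ht
  rcases le_or_gt t 1 with h1 | h1
  · have h4 := psi_le_four_H ht h1
    nlinarith
  · have ht0 : (0:ℝ) < t := lt_trans one_pos h1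
    have hlt : 0 ≤ Real.log t := Real.log_nonneg h1.le
    have hpsi : PsiFun t ≤ (t-1) * Real.log t := by
      have := Real.log_le_sub_one_of_pos ht0
      simp only [PsiFun]
      nlinarith
    have hC := lemC h1.le
    have hA : (t-1)^2 ≤ Hfun t * (8*(t+1)) := by
      rw [← div_le_iff₀ (by positivity)]
      exact lemA ht
    -- (t+1) * ((t-1) * log t) ≤ (t-1) * (2 (t-1)(1+log t)) ≤ 2(1+log t)(t-1)^2
    -- ≤ 2(1+log t) * 8(t+1) H t = (t+1) * (16 (1+log t) H t)
    have e1 : (t-1) * ((t+1) * Real.log t) ≤ (t-1) * (2*(t-1)*(1+Real.log t)) :=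
      mul_le_mul_of_nonneg_left hC (by linarith)
    have e2 : 2*(1+Real.log t) * (t-1)^2 ≤ 2*(1+Real.log t) * (Hfun t * (8*(t+1))) :=
      mul_le_mul_of_nonneg_left hA (by positivity)
    have e3 : (t+1) * ((t-1) * Real.log t) ≤ (t+1) * (16 * (1+Real.log t) * Hfun t) := by
      nlinarith
    have e4 : (t-1) * Real.log t ≤ 16 * (1+Real.log t) * Hfun t :=
      le_of_mul_le_mul_left e3 (by positivity)
    have e5 : 16 * (1+Real.log t) * Hfun t ≤ 16 * (1 + L) * Hfun t := by
      apply mul_le_mul_of_nonneg_right _ hH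
      nlinarith
    linarith

/-- There is a universal constant `C > 0` such that for every finite set `V` with
`|V| ≥ 2` and every probability distribution `q` on `V`,
`d(q, U) ≥ (C / log |V|) · ENT(q)` where `U` is uniform on `V`. -/
theorem d_uniform_entropy_bound :
    ∃ C : ℝ, 0 < C ∧
      ∀ (V : Type) (_ : Fintype V), 2 ≤ Fintype.card V →
        ∀ q : V → ℝ, (∀ i, 0 ≤ q i) → ∑ i, q i = 1 →
          (C / Real.log (Fintype.card V)) *
              (∑ i, q i * Real.log ((Fintype.card V : ℝ) * q i))
            ≤ ∑ i, ((1 / 2) * (q i * Real.log (q i))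
                + (1 / 2) * ((1 / (Fintype.card V : ℝ)) * Real.log (1 / (Fintype.card V : ℝ)))
                - ((q i + 1 / (Fintype.card V : ℝ)) / 2)
                    * Real.log ((q i + 1 / (Fintype.card V : ℝ)) / 2)) := by
  refine ⟨1/64, by norm_num, ?_⟩
  intro V _ hcard q hq hsum
  set n : ℝ := (Fintype.card V : ℝ) with hn
  have hn2 : (2:ℝ) ≤ n := by rw [hn]; exact_mod_cast hcard
  have hn0 : (0:ℝ) < n := by linarith
  have hL2 : Real.log 2 ≤ Real.log n := Real.log_le_log (by norm_num) hn2
  have hlog2 : (0.6931471803:ℝ) < Real.log 2 := Real.log_two_gt_d9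
  have hLpos : 0 < Real.log n := by linarith
  have hq1 : ∀ i, q i ≤ 1 := by
    intro i
    calc q i ≤ ∑ j, q j := Finset.single_le_sum (fun j _ => hq j) (mem_univ i)
    _ = 1 := hsum
  -- per-coordinate pointwise bound
  have key : ∀ i, PsiFun (n * q i) ≤ 16 * (1 + Real.log n) * Hfun (n * q i) := by
    intro i
    apply master (mul_nonneg hn0.le (hq i)) hLpos.le
    rcases eq_or_lt_of_le (hq i) with h0 | h0
    · rw [← h0, mul_zero, Real.log_zero]
      exact hLpos.le
    · apply Real.log_le_log (by positivity)
      nlinarith [hq1 i]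
  -- left sum identity
  have idL : ∑ i, q i * Real.log (n * q i) = ∑ i, (1/n) * PsiFun (n * q i) := by
    have hper : ∀ i, (1/n) * PsiFun (n * q i) = q i * Real.log (n * q i) - q i + 1/n := by
      intro i
      simp only [PsiFun]
      field_simp
    rw [Finset.sum_congr rfl fun i _ => hper i]
    rw [Finset.sum_add_distrib, Finset.sum_sub_distrib, hsum, Finset.sum_const,
      Finset.card_univ, nsmul_eq_mul]
    rw [← hn]  -- may be no-op
    rw [mul_one_div_cancel hn0.ne']
    ring
  -- right sum identity
  have idR : ∀ i, (1 / 2) * (q i * Real.log (q i))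
                + (1 / 2) * ((1 / n) * Real.log (1 / n))
                - ((q i + 1 / n) / 2) * Real.log ((q i + 1 / n) / 2)
              = (1/n) * Hfun (n * q i) := by
    intro i
    have hlogn : Real.log (1/n) = - Real.log n := by
      rw [one_div, Real.log_inv]
    rcases eq_or_lt_of_le (hq i) with h0 | h0
    · have hq0 : q i = 0 := h0.symm
      have e2 : ((0:ℝ) + 1/n) / 2 = (2*n)⁻¹ := by field_simp; ring
      have e3 : Real.log ((2*n)⁻¹) = -(Real.log 2 + Real.log n) := by
        rw [Real.log_inv, Real.log_mul (by norm_num) hn0.ne']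
      have e4 : Hfun (n * 0) = (1/2) * Real.log 2 := by
        rw [mul_zero]
        simp only [Hfun]
        rw [show ((0:ℝ)+1)/2 = 2⁻¹ by norm_num, Real.log_inv, Real.log_zero]
        ring
      rw [hq0, e2, e3, e4, hlogn, Real.log_zero]
      ring
    · have hnq : 0 < n * q i := by positivity
      have hm : 0 < (q i + 1/n) / 2 := by positivity
      have e1 : Real.log (n * q i) = Real.log n + Real.log (q i) :=
        Real.log_mul hn0.ne' h0.ne'
      have e2 : (n * q i + 1) / 2 = n * ((q i + 1/n) / 2) := by field_simp
      have e3 : Real.log ((n * q i + 1) / 2) = Real.log n + Real.log ((q i + 1/n)/2) := by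
        rw [e2, Real.log_mul hn0.ne' hm.ne']
      simp only [Hfun]
      rw [e1, e3, hlogn]
      field_simp
      ring
  rw [idL, Finset.sum_congr rfl fun i _ => idR i]
  -- final arithmetic
  set D := ∑ i, (1/n) * Hfun (n * q i) with hD
  set S := ∑ i, (1/n) * PsiFun (n * q i) with hS
  have hD0 : 0 ≤ D := Finset.sum_nonneg fun i _ =>
    mul_nonneg (by positivity) (Hfun_nonneg (mul_nonneg hn0.le (hq i)))
  have hSD : S ≤ 16 * (1 + Real.log n) * D := by
    rw [hS, hD, Finset.mul_sum]
    apply Finset.sum_le_sum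
    intro i _
    have := mul_le_mul_of_nonneg_left (key i) (by positivity : (0:ℝ) ≤ 1/n)
    nlinarith [this]
  have h4L : 16 * (1 + Real.log n) ≤ 64 * Real.log n := by nlinarith
  have hS64 : S ≤ 64 * Real.log n * D := by nlinarith
  rw [div_mul_eq_mul_div, div_le_iff₀ hLpos]
  nlinarith
end

section
/- Mod-n second moment lemma: fix n ≥ 1 and for a ∈ Z define |a|_n = min(a mod n, (n−a) mod n), and for s = (s₁,s₂) ∈ Z² define |||s|||₂² = |s₁|_n² + |s₂|_n². Let s ∈ Z² and let Δ = (Δ₁, Δ₂) be an integrable random vector in Z² with E Δ₁ = E Δ₂ = 0. Then E[|||s + Δ|||₂²] ≤ |||s|||₂² + E[Δ₁²] + E[Δ₂²]. -/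
open MeasureTheory

/-- `|a|_n`: the distance from `a` to the nearest multiple of `n`,
computed as `min (a mod n) ((n − a) mod n)`. -/
def absn (n : ℕ) (a : ℤ) : ℤ := min (a % (n : ℤ)) (((n : ℤ) - a) % (n : ℤ))

lemma emod_le_self {a n : ℤ} (h : 0 ≤ a) (hn : 0 < n) : a % n ≤ a := by
  have h1 : 0 ≤ a / n := Int.ediv_nonneg h hn.le
  have h2 : 0 ≤ n * (a / n) := mul_nonneg hn.le h1
  rw [Int.emod_def]; omega

lemma absn_nonneg {n : ℕ} (hn : 0 < (n:ℤ)) (a : ℤ) : 0 ≤ absn n a :=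
  le_min (Int.emod_nonneg _ hn.ne') (Int.emod_nonneg _ hn.ne')

lemma absn_add_mul {n : ℕ} (a k : ℤ) : absn n (a + k * n) = absn n a := by
  unfold absn
  congr 1
  · exact Int.add_mul_emod_self_right _ _ _
  · have : (n:ℤ) - (a + k * n) = (n - a) + (-k) * n := by ring
    rw [this, Int.add_mul_emod_self_right]

lemma absn_le_abs {n : ℕ} (hn : 0 < (n:ℤ)) (a : ℤ) : absn n a ≤ |a| := by
  rcases le_or_gt 0 a with h | h
  · refine (min_le_left _ _).trans ?_
    rw [abs_of_nonneg h]
    exact emod_le_self h hn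
  · refine (min_le_right _ _).trans ?_
    rw [abs_of_neg h]
    have e : ((n:ℤ) - a) % n = (-a) % n := by
      have : (n:ℤ) - a = -a + 1 * n := by ring
      rw [this, Int.add_mul_emod_self_right]
    rw [e]
    exact emod_le_self (by omega) hn

/-- representative of `a` mod `n` of minimal absolute value -/
def repn (n : ℕ) (a : ℤ) : ℤ :=
  if a % (n:ℤ) ≤ ((n:ℤ) - a) % n then a % n else a % n - n

lemma repn_spec {n : ℕ} (hn : 0 < (n:ℤ)) (a : ℤ) :
    (∃ k : ℤ, a = repn n a + k * n) ∧ |repn n a| = absn n a := by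
  have h0 : 0 ≤ a % (n:ℤ) := Int.emod_nonneg _ hn.ne'
  have h1 : a % (n:ℤ) < n := Int.emod_lt_of_pos _ hn
  have hdef : a % (n:ℤ) + a / n * n = a := Int.emod_add_ediv_mul a n
  unfold repn absn
  split_ifs with hc
  · exact ⟨⟨a / n, by linarith⟩, by rw [abs_of_nonneg h0, min_eq_left hc]⟩
  · push_neg at hc
    refine ⟨⟨a / n + 1, by ring_nf; linarith⟩, ?_⟩
    have hpos : 0 < a % (n:ℤ) := lt_of_le_of_lt (Int.emod_nonneg _ hn.ne') hc
    rw [abs_of_neg (by omega), min_eq_right hc.le]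
    have e : ((n:ℤ) - a) % n = (n - a % n) % n := by
      rw [show (n:ℤ) - a = (n - a % n) + (-(a/n)) * n by linarith [mul_comm (a/n) (n:ℤ)],
        Int.add_mul_emod_self_right]
    have e2 : ((n:ℤ) - a % (n:ℤ)) % (n:ℤ) = (n:ℤ) - a % (n:ℤ) :=
      Int.emod_eq_of_lt (by omega) (by omega)
    rw [e, e2]
    ring

lemma key_sq {n : ℕ} (hn : 0 < (n:ℤ)) (a d : ℤ) :
    (absn n (a + d)) ^ 2 ≤ (repn n a + d) ^ 2 := by
  obtain ⟨⟨k, hk⟩, habs⟩ := repn_spec hn a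
  have h1 : absn n (a + d) ≤ |repn n a + d| := by
    rw [show a + d = (repn n a + d) + k * (n:ℤ) by linear_combination hk, absn_add_mul]
    exact absn_le_abs hn _
  calc (absn n (a + d)) ^ 2 ≤ |repn n a + d| ^ 2 :=
        pow_le_pow_left₀ (absn_nonneg hn _) h1 2
    _ = (repn n a + d) ^ 2 := sq_abs _

lemma coord_lemma {Ω : Type*} [MeasurableSpace Ω]
    (μ : Measure Ω) [IsProbabilityMeasure μ]
    {n : ℕ} (hn : 0 < (n:ℤ)) (s : ℤ) (Δ : Ω → ℤ)
    (hm : Measurable Δ)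
    (hint : Integrable (fun ω => ((Δ ω : ℝ))) μ)
    (hsq : Integrable (fun ω => ((Δ ω : ℝ)) ^ 2) μ)
    (hE : ∫ ω, ((Δ ω : ℝ)) ∂μ = 0) :
    Integrable (fun ω => (((absn n (s + Δ ω)) ^ 2 : ℤ) : ℝ)) μ ∧
    ∫ ω, (((absn n (s + Δ ω)) ^ 2 : ℤ) : ℝ) ∂μ
      ≤ (((absn n s) ^ 2 : ℤ) : ℝ) + ∫ ω, ((Δ ω : ℝ)) ^ 2 ∂μ := by
  set r : ℤ := repn n s with hr
  have habs : |r| = absn n s := (repn_spec hn s).2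
  set f : Ω → ℝ := fun ω => (((absn n (s + Δ ω)) ^ 2 : ℤ) : ℝ) with hf
  set g : Ω → ℝ := fun ω => ((r : ℝ) + (Δ ω : ℝ)) ^ 2 with hg
  have hfg : ∀ ω, f ω ≤ g ω := by
    intro ω
    have := key_sq hn s (Δ ω)
    have : (((absn n (s + Δ ω)) ^ 2 : ℤ) : ℝ) ≤ (((r + Δ ω) ^ 2 : ℤ) : ℝ) := by
      exact_mod_cast this
    simpa [f, g] using this.trans_eq (by push_cast; ring)
  have hgeq : g = fun ω => (r : ℝ) ^ 2 + (2 * r) * (Δ ω : ℝ) + (Δ ω : ℝ) ^ 2 := by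
    funext ω; simp only [g]; ring
  have hgint : Integrable g μ := by
    rw [hgeq]
    exact ((integrable_const _).add (hint.const_mul _)).add hsq
  have hfm : Measurable f := by
    have : Measurable fun z : ℤ => (((absn n (s + z)) ^ 2 : ℤ) : ℝ) := measurable_from_top
    exact this.comp hm
  have hf0 : ∀ ω, 0 ≤ f ω := fun ω => by
    simp only [f]; positivity
  have hfint : Integrable f μ := by
    refine hgint.mono hfm.aestronglyMeasurable (Filter.Eventually.of_forall fun ω => ?_)
    rw [Real.norm_eq_abs, Real.norm_eq_abs, abs_of_nonneg (hf0 ω)]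
    exact (hfg ω).trans (le_abs_self _)
  refine ⟨hfint, ?_⟩
  have step1 : ∫ ω, f ω ∂μ ≤ ∫ ω, g ω ∂μ := integral_mono hfint hgint hfg
  have step2 : ∫ ω, g ω ∂μ = (r : ℝ) ^ 2 + ∫ ω, ((Δ ω : ℝ)) ^ 2 ∂μ := by
    rw [show (∫ ω, g ω ∂μ)
        = ∫ ω, (((r:ℝ)^2 + (2*(r:ℝ)) * (Δ ω : ℝ)) + (Δ ω : ℝ)^2) ∂μ from
      integral_congr_ae (.of_forall fun ω => by simp only [g]; ring)]
    have i2 : Integrable (fun ω => (2*(r:ℝ)) * (Δ ω : ℝ)) μ := hint.const_mul _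
    have i1 : Integrable (fun ω => (r:ℝ)^2 + (2*(r:ℝ)) * (Δ ω : ℝ)) μ :=
      (integrable_const _).add i2
    rw [integral_add i1 hsq, integral_add (integrable_const _) i2,
      integral_const_mul, hE, integral_const]
    simp
  have hr2 : (r : ℝ) ^ 2 = (((absn n s) ^ 2 : ℤ) : ℝ) := by
    have : r ^ 2 = (absn n s) ^ 2 := by rw [← habs, sq_abs]
    exact_mod_cast this
  calc ∫ ω, f ω ∂μ ≤ ∫ ω, g ω ∂μ := step1
    _ = (((absn n s) ^ 2 : ℤ) : ℝ) + ∫ ω, ((Δ ω : ℝ)) ^ 2 ∂μ := by rw [step2, hr2]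


/-- Mod-`n` second moment lemma: if `Δ = (Δ₁, Δ₂)` is a centered integrable random
vector in `ℤ²`, then `E[|||s + Δ|||₂²] ≤ |||s|||₂² + E[Δ₁²] + E[Δ₂²]`. -/
theorem modn_second_moment {Ω : Type*} [MeasurableSpace Ω]
    (μ : Measure Ω) [IsProbabilityMeasure μ]
    (n : ℕ) (hn : 1 ≤ n) (s₁ s₂ : ℤ) (Δ₁ Δ₂ : Ω → ℤ)
    (hm₁ : Measurable Δ₁) (hm₂ : Measurable Δ₂)
    (hint₁ : Integrable (fun ω => ((Δ₁ ω : ℝ))) μ)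
    (hint₂ : Integrable (fun ω => ((Δ₂ ω : ℝ))) μ)
    (hsq₁ : Integrable (fun ω => ((Δ₁ ω : ℝ)) ^ 2) μ)
    (hsq₂ : Integrable (fun ω => ((Δ₂ ω : ℝ)) ^ 2) μ)
    (hE₁ : ∫ ω, ((Δ₁ ω : ℝ)) ∂μ = 0)
    (hE₂ : ∫ ω, ((Δ₂ ω : ℝ)) ∂μ = 0) :
    ∫ ω, (((absn n (s₁ + Δ₁ ω)) ^ 2 + (absn n (s₂ + Δ₂ ω)) ^ 2 : ℤ) : ℝ) ∂μ
      ≤ (((absn n s₁) ^ 2 + (absn n s₂) ^ 2 : ℤ) : ℝ)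
        + ∫ ω, ((Δ₁ ω : ℝ)) ^ 2 ∂μ + ∫ ω, ((Δ₂ ω : ℝ)) ^ 2 ∂μ := by
  have hn' : 0 < (n:ℤ) := by exact_mod_cast hn
  obtain ⟨hi1, hb1⟩ := coord_lemma μ hn' s₁ Δ₁ hm₁ hint₁ hsq₁ hE₁
  obtain ⟨hi2, hb2⟩ := coord_lemma μ hn' s₂ Δ₂ hm₂ hint₂ hsq₂ hE₂
  have hsplit : ∫ ω, (((absn n (s₁ + Δ₁ ω)) ^ 2 + (absn n (s₂ + Δ₂ ω)) ^ 2 : ℤ) : ℝ) ∂μ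
      = ∫ ω, (((absn n (s₁ + Δ₁ ω)) ^ 2 : ℤ) : ℝ) ∂μ
        + ∫ ω, (((absn n (s₂ + Δ₂ ω)) ^ 2 : ℤ) : ℝ) ∂μ := by
    rw [← integral_add hi1 hi2]
    exact integral_congr_ae (.of_forall fun ω => by push_cast; ring)
  rw [hsplit]
  push_cast at hb1 hb2 ⊢
  linarith
end
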